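/- arXiv:2105.15008 — 2 statements merged into one kernel-verified Lean document; each statement's English description precedes it below -/
import Mathlib

section
/- Let {X(t): 0 ≤ t ≤ T} be a Brownian motion with drift μ and diffusion coefficient σ > 0 under P, let r ∈ ℝ, and let h* be the real number satisfying μ + h* σ² = r − σ²/2. Then for every event B measurable with respect to σ(X(t): 0 ≤ t ≤ T), the factorization formula holds: E(e^{X(T)} I(B); h*) = e^{rT} · Pr(B; h* + 1), where E(Y; h) := E_P[Y e^{h X(T)}]/E_P[e^{h X(T)}] and Pr(B; h) := E(I(B); h). -/
open MeasureTheory ProbabilityTheory Set Real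

lemma integral_exp_gaussianReal (v : NNReal) (hv : v ≠ 0) (s : ℝ) :
    ∫ x, Real.exp (s * x) ∂(gaussianReal 0 v) = Real.exp (s ^ 2 * v / 2) := by
  have hv' : (v : ℝ) ≠ 0 := by exact_mod_cast hv
  have hv0 : (0 : ℝ) < v := lt_of_le_of_ne v.coe_nonneg (Ne.symm hv')
  rw [gaussianReal_of_var_ne_zero _ hv, gaussianPDF_def]
  have hofReal : (fun x => ENNReal.ofReal (gaussianPDFReal 0 v x))
      = fun x => ((gaussianPDFReal 0 v x).toNNReal : ENNReal) := by
    funext x; rfl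
  rw [hofReal, integral_withDensity_eq_integral_smul
    ((measurable_gaussianPDFReal 0 v).real_toNNReal)]
  have key : ∀ x : ℝ, ((gaussianPDFReal 0 v x).toNNReal : ℝ) • Real.exp (s * x)
      = Real.exp (s ^ 2 * v / 2) * gaussianPDFReal (s * v) v x := by
    intro x
    rw [smul_eq_mul, Real.coe_toNNReal _ (gaussianPDFReal_nonneg 0 v x)]
    simp only [gaussianPDFReal]
    have heq : -(x - 0) ^ 2 / (2 * (v:ℝ)) + s * x
        = s ^ 2 * (v:ℝ) / 2 + -(x - s * (v:ℝ)) ^ 2 / (2 * (v:ℝ)) := by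
      field_simp
      ring
    rw [mul_assoc, ← Real.exp_add, heq, Real.exp_add]
    ring
  simp_rw [NNReal.smul_def, key]
  rw [integral_const_mul, integral_gaussianPDFReal_eq_one (s * v) hv, mul_one]


/-- A standard Brownian motion on the time interval `[0, T]`: continuous paths started at `0`,
with Gaussian increments `W t - W s ∼ N(0, t - s)` for `0 ≤ s ≤ t ≤ T` that are independent
over disjoint intervals. -/
structure IsStdBMOn {Ω : Type*} [MeasurableSpace Ω] (P : Measure Ω) (W : ℝ → Ω → ℝ)
    (T : ℝ) : Prop where
  init : ∀ ω, W 0 ω = 0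
  cont : ∀ ω, ContinuousOn (fun t => W t ω) (Set.Icc 0 T)
  meas : ∀ t, Measurable (W t)
  incr : ∀ s t : ℝ, 0 ≤ s → s ≤ t → t ≤ T →
    P.map (fun ω => W t ω - W s ω) = gaussianReal 0 (t - s).toNNReal
  indep : ∀ (k : ℕ) (ts : Fin (k + 1) → ℝ), Monotone ts → 0 ≤ ts 0 → ts (Fin.last k) ≤ T →
    iIndepFun
      (fun i : Fin k => fun ω => W (ts i.succ) ω - W (ts i.castSucc) ω) P

/-- `X` is a Brownian motion with drift `μ` and diffusion coefficient `σ` on `[0, T]`: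
`X t = μ t + σ W t` on `[0, T]` for a standard Brownian motion `W` on `[0, T]`. -/
def IsBMOn {Ω : Type*} [MeasurableSpace Ω] (P : Measure Ω) (X : ℝ → Ω → ℝ)
    (μ σ T : ℝ) : Prop :=
  ∃ W : ℝ → Ω → ℝ, IsStdBMOn P W T ∧ ∀ t ∈ Set.Icc (0 : ℝ) T, ∀ ω, X t ω = μ * t + σ * W t ω


/-- The Esscher expectation `E(Y; h) = E_P[Y e^{h X(T)}] / E_P[e^{h X(T)}]`. -/
noncomputable def esscherExp {Ω : Type*} [MeasurableSpace Ω] (P : Measure Ω)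
    (XT : Ω → ℝ) (h : ℝ) (Y : Ω → ℝ) : ℝ :=
  (∫ ω, Y ω * Real.exp (h * XT ω) ∂P) / ∫ ω, Real.exp (h * XT ω) ∂P


lemma integral_exp_BM {Ω : Type*} [MeasurableSpace Ω] (P : Measure Ω) [IsProbabilityMeasure P]
    (μ σ T : ℝ) (hT : 0 < T) (X : ℝ → Ω → ℝ) (hX : IsBMOn P X μ σ T) (h : ℝ) :
    ∫ ω, Real.exp (h * X T ω) ∂P = Real.exp (h * μ * T + h ^ 2 * σ ^ 2 * T / 2) := by
  obtain ⟨W, hW, hXW⟩ := hX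
  have hmapW : P.map (W T) = gaussianReal 0 T.toNNReal := by
    have := hW.incr 0 T le_rfl hT.le le_rfl
    simpa [hW.init, sub_zero] using this
  have h1 : ∫ ω, Real.exp (h * X T ω) ∂P = ∫ ω, Real.exp (h * (μ * T + σ * W T ω)) ∂P := by
    refine integral_congr_ae (Filter.Eventually.of_forall fun ω => ?_)
    dsimp only
    rw [hXW T ⟨hT.le, le_rfl⟩ ω]
  have h2 : ∫ ω, Real.exp (h * (μ * T + σ * W T ω)) ∂P
      = ∫ x, Real.exp (h * (μ * T + σ * x)) ∂(P.map (W T)) := by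
    rw [integral_map (hW.meas T).aemeasurable]
    exact (Continuous.aestronglyMeasurable (by continuity))
  have hvT : T.toNNReal ≠ 0 := by
    simp [Real.toNNReal_eq_zero, not_le, hT]
  have hcoe : ((T.toNNReal : ℝ)) = T := Real.coe_toNNReal T hT.le
  have h3 : ∫ x, Real.exp (h * (μ * T + σ * x)) ∂(gaussianReal 0 T.toNNReal)
      = Real.exp (h * μ * T) * Real.exp ((h * σ) ^ 2 * T.toNNReal / 2) := by
    have : ∀ x : ℝ, Real.exp (h * (μ * T + σ * x))
        = Real.exp (h * μ * T) * Real.exp ((h * σ) * x) := by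
      intro x; rw [← Real.exp_add]; ring_nf
    simp_rw [this]
    rw [integral_const_mul, integral_exp_gaussianReal T.toNNReal hvT (h * σ)]
  rw [h1, h2, hmapW, h3, hcoe, ← Real.exp_add]
  ring_nf

/-- **Factorization formula.** If `X` is a Brownian motion with drift `μ` and diffusion
`σ > 0` on `[0, T]` under `P`, `h*` satisfies `μ + h* σ² = r - σ²/2`, and `B` is an event
measurable with respect to `σ(X(t) : 0 ≤ t ≤ T)`, then
`E(e^{X(T)} I(B); h*) = e^{rT} Pr(B; h* + 1)`. -/
theorem esscher_factorization_formula
    {Ω : Type*} [MeasurableSpace Ω] (P : Measure Ω) [IsProbabilityMeasure P]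
    (μ σ T r hstar : ℝ) (hσ : 0 < σ) (hT : 0 < T)
    (X : ℝ → Ω → ℝ) (hX : IsBMOn P X μ σ T)
    (hstar_def : μ + hstar * σ ^ 2 = r - σ ^ 2 / 2)
    (B : Set Ω)
    (hB : MeasurableSet[⨆ t ∈ Set.Icc (0 : ℝ) T,
      MeasurableSpace.comap (X t) Real.measurableSpace] B) :
    esscherExp P (X T) hstar (fun ω => Real.exp (X T ω) * B.indicator (fun _ => (1 : ℝ)) ω) =
      Real.exp (r * T) *
        esscherExp P (X T) (hstar + 1) (B.indicator fun _ => (1 : ℝ)) := by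
  have hnum : (∫ ω, (fun ω => Real.exp (X T ω) * B.indicator (fun _ => (1:ℝ)) ω) ω
        * Real.exp (hstar * X T ω) ∂P)
      = ∫ ω, B.indicator (fun _ => (1:ℝ)) ω * Real.exp ((hstar + 1) * X T ω) ∂P := by
    refine integral_congr_ae (Filter.Eventually.of_forall fun ω => ?_)
    simp only [add_mul, one_mul, Real.exp_add]
    ring
  have hc2 : (hstar + 1) * μ * T + (hstar + 1) ^ 2 * σ ^ 2 * T / 2
      = r * T + (hstar * μ * T + hstar ^ 2 * σ ^ 2 * T / 2) := by
    linear_combination T * hstar_def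
  rw [esscherExp, esscherExp, hnum,
    integral_exp_BM P μ σ T hT X hX hstar, integral_exp_BM P μ σ T hT X hX (hstar + 1),
    hc2, Real.exp_add (r * T)]
  field_simp [Real.exp_ne_zero]
end

section
/- Consider the Black–Scholes model S(t) = S(0) e^{X(t)} where, under the risk-neutral measure, {X(t): 0 ≤ t ≤ T} is a Brownian motion with drift r − σ²/2 and diffusion coefficient σ > 0, with r the interest rate. Fix 0 = t_0 < t_1 < ⋯ < t_n = T, a subset I = {i_1,…,i_g} of {1,…,n}, icicle levels L_1,…,L_n > 0 and barrier levels B_i > 0 for i ∈ I, and set x_i = ln(L_i/S(0)), m_i = ln(B_i/S(0)), k = ln(K/S(0)) for strike K > 0. Let A_d = {X(t_1) ≥ x_1, …, X(t_n) ≥ x_n} ∩ ∩_{i∈I} {m(t_{i-1},t_i) ≥ m_i}, where m(s,t) is the minimum of X over [s,t]. Assume m_{min(I)} ≤ 0 and x_{i-1} ≥ m_i, x_i ≥ m_i for every i ∈ I. Then the down-and-out icicled multi-step barrier call price satisfies e^{−rT} E[(S(T) − K)⁺ I(A_d)] = S(0) PA_u(−r − σ²/2; −x_1,…,−x_{n-1},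 min(−x_n, −k); −m_{i_1},…,−m_{i_g}) − K e^{−rT} PA_u(−r + σ²/2; −x_1,…,−x_{n-1}, min(−x_n, −k); −m_{i_1},…,−m_{i_g}). -/
open MeasureTheory ProbabilityTheory Set

/-- A standard Brownian motion on `[0, ∞)`: continuous paths started at `0`, with
Gaussian increments `W t - W s ∼ N(0, t - s)` that are independent over disjoint intervals. -/
structure IsStdBM {Ω : Type*} [MeasurableSpace Ω] (P : Measure Ω) (W : ℝ → Ω → ℝ) : Prop where
  init : ∀ ω, W 0 ω = 0
  cont : ∀ ω, Continuous fun t => W t ω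
  meas : ∀ t, Measurable (W t)
  incr : ∀ s t : ℝ, 0 ≤ s → s ≤ t →
    P.map (fun ω => W t ω - W s ω) = gaussianReal 0 (t - s).toNNReal
  indep : ∀ (k : ℕ) (ts : Fin (k + 1) → ℝ), Monotone ts → 0 ≤ ts 0 →
    iIndepFun
      (fun i : Fin k => fun ω => W (ts i.succ) ω - W (ts i.castSucc) ω) P

/-- `X` is a Brownian motion with drift `μ` and diffusion coefficient `σ`:
`X t = μ t + σ W t` for a standard Brownian motion `W`. -/
def IsBM {Ω : Type*} [MeasurableSpace Ω] (P : Measure Ω) (X : ℝ → Ω → ℝ) (μ σ : ℝ) : Prop :=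
  ∃ W : ℝ → Ω → ℝ, IsStdBM P W ∧ ∀ t ω, X t ω = μ * t + σ * W t ω

/-- The running maximum `M(s,t) = max {X τ : s ≤ τ ≤ t}`. -/
noncomputable def runMax {Ω : Type*} (X : ℝ → Ω → ℝ) (s t : ℝ) (ω : Ω) : ℝ :=
  sSup ((fun τ => X τ ω) '' Set.Icc s t)

/-- The sequence `m[i]`: `m[0] = 0`, `m[i] = m i - m[i-1]` if `i ∈ J`, else `m[i-1]`. -/
noncomputable def mseq (J : Finset ℕ) (m : ℕ → ℝ) : ℕ → ℝ
  | 0 => 0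
  | i + 1 => if i + 1 ∈ J then m (i + 1) - mseq J m i else mseq J m i

/-- The sign `s_i`: `1` if the number of elements of `J` greater than `i` is even, else `-1`. -/
noncomputable def ssign (J : Finset ℕ) (i : ℕ) : ℝ :=
  if Even (J.filter (fun k => i < k)).card then 1 else -1

/-- `PA_u(X; x; m) = Pr(X(t₁) ≤ x₁, …, X(tₙ) ≤ xₙ, ∩_{i∈I} {M(t_{i-1},t_i) ≤ m_i})`,
the multi-step barrier probability for the process `X`. -/
noncomputable def PAu {Ω : Type*} [MeasurableSpace Ω] (P : Measure Ω) (X : ℝ → Ω → ℝ)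
    (t : ℕ → ℝ) (n : ℕ) (I : Finset ℕ) (x m : ℕ → ℝ) : ℝ :=
  (P {ω | (∀ i ∈ Finset.Icc 1 n, X (t i) ω ≤ x i) ∧
      ∀ i ∈ I, runMax X (t (i - 1)) (t i) ω ≤ m i}).toReal

/-- The running minimum `m(s,t) = min {X τ : s ≤ τ ≤ t}`. -/
noncomputable def runMin {Ω : Type*} (X : ℝ → Ω → ℝ) (s t : ℝ) (ω : Ω) : ℝ :=
  sInf ((fun τ => X τ ω) '' Set.Icc s t)

section Chunk1

variable {Ω : Type*} [MeasurableSpace Ω] {P : Measure Ω} {X W : ℝ → Ω → ℝ} {ν σ : ℝ}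

lemma IsBM.measurable (h : IsBM P X ν σ) (τ : ℝ) : Measurable (X τ) := by
  obtain ⟨W, hW, hX⟩ := h
  have : X τ = fun ω => ν * τ + σ * W τ ω := funext fun ω => hX τ ω
  rw [this]
  exact measurable_const.add ((hW.meas τ).const_mul σ)

lemma IsBM.continuous (h : IsBM P X ν σ) (ω : Ω) : Continuous fun τ => X τ ω := by
  obtain ⟨W, hW, hX⟩ := h
  have : (fun τ => X τ ω) = fun τ => ν * τ + σ * W τ ω := funext fun τ => hX τ ω
  rw [this]
  exact ((continuous_const.mul continuous_id).add (continuous_const.mul (hW.cont ω)))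

lemma IsBM.zero (h : IsBM P X ν σ) (ω : Ω) : X 0 ω = 0 := by
  obtain ⟨W, hW, hX⟩ := h
  rw [hX 0 ω, hW.init ω]; ring

lemma IsStdBM.neg (h : IsStdBM P W) : IsStdBM P (fun t ω => -W t ω) where
  init ω := by simp [h.init ω]
  cont ω := (h.cont ω).neg
  meas t := (h.meas t).neg
  incr s t hs hst := by
    have heq : (fun ω => -W t ω - -W s ω) = (fun x : ℝ => (-1 : ℝ) * x) ∘ (fun ω => W t ω - W s ω) := by
      funext ω; simp [Function.comp]; ring
    rw [heq, ← Measure.map_map (g := fun x : ℝ => (-1 : ℝ) * x) (f := fun ω => W t ω - W s ω)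
        (measurable_const_mul (-1)) ((h.meas t).sub (h.meas s)),
      h.incr s t hs hst, gaussianReal_map_const_mul]
    congr 1
    · ring
    · ext; norm_num
  indep k ts hts h0 := by
    have := (h.indep k ts hts h0).comp (fun _ => fun x : ℝ => -x) (fun _ => measurable_neg)
    have heq : (fun (i : Fin k) => (fun x : ℝ => -x) ∘ (fun ω => W (ts i.succ) ω - W (ts i.castSucc) ω))
        = fun (i : Fin k) => fun ω => (-W (ts i.succ) ω) - (-W (ts i.castSucc) ω) := by
      funext i ω; simp [Function.comp]; ring
    rwa [heq] at this

lemma IsBM.neg (h : IsBM P X ν σ) : IsBM P (fun t ω => -X t ω) (-ν) σ := by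
  obtain ⟨W, hW, hX⟩ := h
  exact ⟨fun t ω => -W t ω, hW.neg, fun t ω => by show -X t ω = _; rw [hX t ω]; ring⟩

lemma iIndepFun_map_pi [IsProbabilityMeasure P] {M : ℕ} {f : Fin M → Ω → ℝ}
    (hf : ∀ i, Measurable (f i))
    (h : iIndepFun f P) :
    P.map (fun ω i => f i ω) = Measure.pi (fun i => P.map (f i)) := by
  haveI : ∀ i, IsProbabilityMeasure (P.map (f i)) :=
    fun i => Measure.isProbabilityMeasure_map (hf i).aemeasurable
  refine (Measure.pi_eq fun s hs => ?_).symm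
  rw [Measure.map_apply (measurable_pi_lambda _ hf) (MeasurableSet.univ_pi hs)]
  have heq : (fun ω i => f i ω) ⁻¹' Set.pi univ s = ⋂ i, f i ⁻¹' s i := by
    ext ω; simp [Set.mem_pi]
  rw [heq, h.meas_iInter (fun i => ⟨s i, hs i, rfl⟩)]
  exact Finset.prod_congr rfl fun i _ => (Measure.map_apply (hf i) (hs i)).symm

end Chunk1

section Chunk2

open Finset in
/-- partial sum of the first `i` coordinates -/
def psum {M : ℕ} (v : Fin M → ℝ) (i : Fin (M + 1)) : ℝ :=
  ∑ l : Fin M, if (l : ℕ) < (i : ℕ) then v l else 0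

lemma psum_zero {M : ℕ} (v : Fin M → ℝ) : psum v 0 = 0 := by
  simp [psum]

lemma psum_succ {M : ℕ} (v : Fin M → ℝ) (i : Fin M) :
    psum v i.succ = psum v i.castSucc + v i := by
  have hsplit : ∀ l : Fin M,
      (if (l : ℕ) < (i.succ : ℕ) then v l else 0)
        = (if (l : ℕ) < (i.castSucc : ℕ) then v l else 0) + (if l = i then v l else 0) := by
    intro l
    simp only [Fin.val_succ, Fin.coe_castSucc]
    rcases lt_trichotomy (l : ℕ) (i : ℕ) with hlt | heq | hgt
    · rw [if_pos (by omega), if_pos hlt, if_neg, add_zero]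
      exact fun he => absurd (congrArg Fin.val he) (Nat.ne_of_lt hlt)
    · rw [if_pos (by omega), if_neg (by omega), if_pos (Fin.ext heq), zero_add]
    · rw [if_neg (by omega), if_neg (by omega), if_neg, add_zero]
      exact fun he => absurd (congrArg Fin.val he) (Nat.ne_of_gt hgt)
  unfold psum
  rw [Finset.sum_congr rfl fun l _ => hsplit l, Finset.sum_add_distrib]
  congr 1
  simp

lemma psum_last {M : ℕ} (v : Fin M → ℝ) : psum v (Fin.last M) = ∑ l, v l := by
  unfold psum
  exact Finset.sum_congr rfl fun l _ => by simp [Fin.is_lt]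

lemma measurable_psum {M : ℕ} (i : Fin (M + 1)) :
    Measurable fun v : Fin M → ℝ => psum v i := by
  unfold psum
  refine Finset.measurable_sum _ fun l _ => ?_
  split_ifs
  · exact measurable_pi_apply l
  · exact measurable_const

variable {Ω : Type*} [MeasurableSpace Ω] {P : Measure Ω} {Z : ℝ → Ω → ℝ} {ν σ : ℝ}

lemma IsBM.eq_psum (h : IsBM P Z ν σ) {M : ℕ} {ts : Fin (M + 1) → ℝ} (h0 : ts 0 = 0)
    (ω : Ω) (i : Fin (M + 1)) :
    Z (ts i) ω = psum (fun l : Fin M => Z (ts l.succ) ω - Z (ts l.castSucc) ω) i := by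
  induction i using Fin.induction with
  | zero => rw [h0, h.zero ω, psum_zero]
  | succ i ih => rw [psum_succ, ← ih]; ring

/-- law of the increments of a BM over a monotone time grid starting at `0`. -/
lemma IsBM.map_increments [IsProbabilityMeasure P] (h : IsBM P Z ν σ) {M : ℕ}
    {ts : Fin (M + 1) → ℝ} (hmono : Monotone ts) (h0 : ts 0 = 0) :
    P.map (fun ω (i : Fin M) => Z (ts i.succ) ω - Z (ts i.castSucc) ω)
      = Measure.pi (fun i => gaussianReal (ν * (ts i.succ - ts i.castSucc))
          (σ ^ 2 * (ts i.succ - ts i.castSucc)).toNNReal) := by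
  obtain ⟨W, hW, hX⟩ := h
  have hg : ∀ i : Fin M, Measurable fun ω => W (ts i.succ) ω - W (ts i.castSucc) ω :=
    fun i => (hW.meas _).sub (hW.meas _)
  have hind := hW.indep M ts hmono (le_of_eq h0.symm)
  have hcomp := hind.comp
    (fun i : Fin M => fun x : ℝ => ν * (ts i.succ - ts i.castSucc) + σ * x)
    (fun i => measurable_const.add (measurable_const_mul σ))
  have heqf : ∀ i : Fin M, (fun x : ℝ => ν * (ts i.succ - ts i.castSucc) + σ * x)
      ∘ (fun ω => W (ts i.succ) ω - W (ts i.castSucc) ω)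
      = fun ω => Z (ts i.succ) ω - Z (ts i.castSucc) ω := by
    intro i; funext ω; simp only [Function.comp]
    rw [hX (ts i.succ) ω, hX (ts i.castSucc) ω]; ring
  rw [funext heqf] at hcomp
  have hZm : ∀ i : Fin M, Measurable fun ω => Z (ts i.succ) ω - Z (ts i.castSucc) ω := by
    intro i
    rw [← heqf i]
    exact (measurable_const.add (measurable_const_mul σ)).comp (hg i)
  rw [iIndepFun_map_pi hZm hcomp]
  congr 1
  funext i
  rw [← heqf i, ← Measure.map_map (g := fun x : ℝ => ν * (ts i.succ - ts i.castSucc) + σ * x)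
    (f := fun ω => W (ts i.succ) ω - W (ts i.castSucc) ω)
    (measurable_const.add (measurable_const_mul σ)) (hg i)]
  have hcast0 : (0 : ℝ) ≤ ts i.castSucc := h0 ▸ hmono (Fin.zero_le _)
  have hle : ts i.castSucc ≤ ts i.succ := hmono (Fin.castSucc_lt_succ (i := i)).le
  rw [hW.incr _ _ hcast0 hle]
  have h1 : (fun x : ℝ => ν * (ts i.succ - ts i.castSucc) + σ * x)
      = (fun x : ℝ => x + ν * (ts i.succ - ts i.castSucc)) ∘ (fun x : ℝ => σ * x) := by
    funext x; simp [Function.comp]; ring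
  rw [h1, ← Measure.map_map (measurable_add_const _) (measurable_const_mul σ),
    gaussianReal_map_const_mul, gaussianReal_map_add_const]
  congr 1
  · ring
  · ext
    push_cast
    rw [Real.coe_toNNReal _ (sub_nonneg.mpr hle),
      Real.coe_toNNReal _ (mul_nonneg (sq_nonneg σ) (sub_nonneg.mpr hle))]
end Chunk2

section Chunk3

open Real
open scoped NNReal ENNReal

lemma measurable_ofReal_exp_neg : Measurable fun x : ℝ => ENNReal.ofReal (rexp (-x)) :=
  (Real.measurable_exp.comp measurable_neg).ennreal_ofReal

lemma ennreal_ofReal_prod {ι : Type*} (s : Finset ι) (f : ι → ℝ) (hf : ∀ i ∈ s, 0 ≤ f i) :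
    ∏ i ∈ s, ENNReal.ofReal (f i) = ENNReal.ofReal (∏ i ∈ s, f i) := by
  induction s using Finset.cons_induction with
  | empty => simp
  | cons a s ha ih =>
    rw [Finset.prod_cons, Finset.prod_cons, ih (fun i hi => hf i (Finset.mem_cons_of_mem hi)),
      ENNReal.ofReal_mul (hf a (Finset.mem_cons_self a s))]

lemma gaussianPDFReal_tilt (m : ℝ) (V : ℝ≥0) (hV : V ≠ 0) (x : ℝ) :
    gaussianPDFReal m V x * rexp (-x)
      = rexp ((V : ℝ) / 2 - m) * gaussianPDFReal (m - V) V x := by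
  have hV' : (0 : ℝ) < V := by positivity
  unfold gaussianPDFReal
  have hE : -(x - m) ^ 2 / (2 * (V : ℝ)) + -x
      = ((V : ℝ) / 2 - m) + -(x - (m - (V : ℝ))) ^ 2 / (2 * (V : ℝ)) := by
    field_simp
    ring
  rw [mul_assoc, ← Real.exp_add, hE, Real.exp_add]
  ring

lemma gaussianReal_tilt (m : ℝ) (V : ℝ≥0) :
    (gaussianReal m V).withDensity (fun x => ENNReal.ofReal (rexp (-x)))
      = ENNReal.ofReal (rexp ((V : ℝ) / 2 - m)) • gaussianReal (m - V) V := by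
  classical
  rcases eq_or_ne V 0 with hV | hV
  · subst hV
    simp only [gaussianReal_zero_var, NNReal.coe_zero, zero_div, zero_sub, sub_zero]
    ext s hs
    rw [withDensity_apply _ hs, setLIntegral_dirac' measurable_ofReal_exp_neg hs]
    simp only [Measure.smul_apply, Measure.dirac_apply' _ hs, smul_eq_mul,
      Set.indicator_apply]
    split_ifs <;> simp
  · rw [gaussianReal_of_var_ne_zero _ hV, gaussianReal_of_var_ne_zero _ hV,
      ← withDensity_mul _ (measurable_gaussianPDF _ _) measurable_ofReal_exp_neg]
    have hpt : gaussianPDF m V * (fun x => ENNReal.ofReal (rexp (-x)))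
        = ENNReal.ofReal (rexp ((V : ℝ) / 2 - m)) • gaussianPDF (m - V) V := by
      funext x
      simp only [Pi.mul_apply, Pi.smul_apply, smul_eq_mul]
      unfold gaussianPDF
      rw [← ENNReal.ofReal_mul (gaussianPDFReal_nonneg _ _ _),
        ← ENNReal.ofReal_mul (Real.exp_pos _).le, gaussianPDFReal_tilt m V hV x]
    rw [hpt, withDensity_smul _ (measurable_gaussianPDF _ _)]

/-- Factorization of the Lebesgue integral of a product function over `Measure.pi`. -/
lemma lintegral_pi_prod : ∀ (M : ℕ) (G : Fin M → Measure ℝ),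
    (∀ i, IsProbabilityMeasure (G i)) → ∀ (f : Fin M → ℝ → ℝ≥0∞), (∀ i, Measurable (f i)) →
    ∫⁻ v, ∏ i, f i (v i) ∂Measure.pi G = ∏ i, ∫⁻ x, f i x ∂G i := by
  intro M
  induction M with
  | zero =>
    intro G hG f hf
    haveI := fun i => hG i
    simp only [Finset.univ_eq_empty, Finset.prod_empty]
    rw [lintegral_one]
    exact measure_univ
  | succ M ih =>
    intro G hG f hf
    haveI := fun i => hG i
    have hmp := (MeasureTheory.measurePreserving_piFinSuccAbove G 0).symm
      (MeasurableEquiv.piFinSuccAbove (fun _ => ℝ) 0)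
    have hF : Measurable fun v : Fin (M + 1) → ℝ => ∏ i, f i (v i) :=
      Finset.measurable_prod _ fun i _ => (hf i).comp (measurable_pi_apply i)
    rw [← hmp.lintegral_comp hF]
    have hptw : ∀ p : ℝ × (Fin M → ℝ),
        (∏ i, f i (((MeasurableEquiv.piFinSuccAbove (fun _ => ℝ) 0).symm p) i))
          = f 0 p.1 * ∏ i : Fin M, f i.succ (p.2 i) := by
      rintro ⟨x, y⟩
      have hcons : (MeasurableEquiv.piFinSuccAbove (fun _ : Fin (M+1) => ℝ) 0).symm (x, y)
          = Fin.cons x y := by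
        simp [MeasurableEquiv.piFinSuccAbove, Fin.insertNthEquiv, Fin.insertNth_zero]
      rw [hcons, Fin.prod_univ_succ]
      simp
    simp only [Function.comp_def, hptw]
    have hmeas2 : Measurable fun y : Fin M → ℝ => ∏ i : Fin M, f i.succ (y i) :=
      Finset.measurable_prod _ fun i _ => (hf i.succ).comp (measurable_pi_apply i)
    rw [MeasureTheory.lintegral_prod
      (fun p : ℝ × (Fin M → ℝ) => f 0 p.1 * ∏ i : Fin M, f i.succ (p.2 i))
      (Measurable.aemeasurable (((hf 0).comp measurable_fst).mul
        (hmeas2.comp measurable_snd)))]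
    have hin : ∀ x : ℝ, ∫⁻ y, f 0 x * ∏ i : Fin M, f i.succ (y i)
          ∂Measure.pi (fun i : Fin M => G ((0 : Fin (M+1)).succAbove i))
        = f 0 x * ∏ i : Fin M, ∫⁻ z, f i.succ z ∂G i.succ := by
      intro x
      rw [lintegral_const_mul _ hmeas2]
      congr 1
      have hGs : (fun i : Fin M => G ((0 : Fin (M+1)).succAbove i)) = fun i => G i.succ := by
        funext i; rw [Fin.succAbove_zero]
      rw [hGs, ih (fun i => G i.succ) (fun i => hG i.succ) (fun i => f i.succ)
        (fun i => hf i.succ)]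
    simp only [hin]
    rw [lintegral_mul_const _ (hf 0), Fin.prod_univ_succ]

lemma pi_tilt (M : ℕ) (mV : Fin M → ℝ) (VV : Fin M → ℝ≥0) :
    (Measure.pi fun i => gaussianReal (mV i) (VV i)).withDensity
        (fun v => ENNReal.ofReal (rexp (-∑ i, v i)))
      = (∏ i, ENNReal.ofReal (rexp ((VV i : ℝ) / 2 - mV i))) •
          Measure.pi (fun i => gaussianReal (mV i - VV i) (VV i)) := by
  set c : ℝ≥0∞ := ∏ i, ENNReal.ofReal (rexp ((VV i : ℝ) / 2 - mV i)) with hc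
  have hc0 : c ≠ 0 := by
    rw [hc]
    exact Finset.prod_ne_zero_iff.mpr fun i _ => by positivity
  have hctop : c ≠ ⊤ := by
    rw [hc]
    exact (ENNReal.prod_lt_top fun i _ => ENNReal.ofReal_lt_top).ne
  have key : c⁻¹ • ((Measure.pi fun i => gaussianReal (mV i) (VV i)).withDensity
      (fun v => ENNReal.ofReal (rexp (-∑ i, v i))))
      = Measure.pi (fun i => gaussianReal (mV i - VV i) (VV i)) := by
    refine (Measure.pi_eq fun s hs => ?_).symm
    rw [Measure.smul_apply, smul_eq_mul,
      withDensity_apply _ (MeasurableSet.univ_pi hs),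
      ← lintegral_indicator (MeasurableSet.univ_pi hs)]
    have hptw : ∀ v : Fin M → ℝ,
        (Set.pi Set.univ s).indicator (fun v : Fin M → ℝ =>
            ENNReal.ofReal (rexp (-∑ i, v i))) v
          = ∏ i, (s i).indicator (fun x => ENNReal.ofReal (rexp (-x))) (v i) := by
      intro v
      by_cases hv : v ∈ Set.pi Set.univ s
      · rw [Set.indicator_of_mem hv]
        have hone : ∀ i : Fin M, (s i).indicator (fun x => ENNReal.ofReal (rexp (-x))) (v i)
            = ENNReal.ofReal (rexp (-v i)) :=
          fun i => Set.indicator_of_mem (hv i (Set.mem_univ i)) _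
        rw [Finset.prod_congr rfl fun i _ => hone i,
          ennreal_ofReal_prod _ _ (fun i _ => (Real.exp_pos _).le), ← Real.exp_sum,
          Finset.sum_neg_distrib]
      · rw [Set.indicator_of_notMem hv]
        rw [Set.mem_pi] at hv
        push_neg at hv
        obtain ⟨i, _, hi⟩ := hv
        exact (Finset.prod_eq_zero (Finset.mem_univ i)
          (by rw [Set.indicator_of_notMem hi])).symm
    rw [lintegral_congr hptw,
      lintegral_pi_prod M _ (fun i => inferInstance) _
        (fun i => measurable_ofReal_exp_neg.indicator (hs i))]
    have hfac : ∀ i, ∫⁻ x, (s i).indicator (fun x => ENNReal.ofReal (rexp (-x))) x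
          ∂gaussianReal (mV i) (VV i)
        = ENNReal.ofReal (rexp ((VV i : ℝ) / 2 - mV i)) *
            gaussianReal (mV i - VV i) (VV i) (s i) := by
      intro i
      rw [lintegral_indicator (hs i), ← withDensity_apply _ (hs i), gaussianReal_tilt]
      simp [Measure.smul_apply]
    rw [Finset.prod_congr rfl fun i _ => hfac i, Finset.prod_mul_distrib, ← hc,
      ← mul_assoc, ENNReal.inv_mul_cancel hc0 hctop, one_mul]
  rw [← key, smul_smul, ENNReal.mul_inv_cancel hc0 hctop, one_smul]
end Chunk3

section Chunk4

open Real
open scoped NNReal ENNReal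

variable {Ω : Type*} [MeasurableSpace Ω] {P : Measure Ω} {V Z Z' : ℝ → Ω → ℝ} {ν σ : ℝ}

lemma ts_telescope {M : ℕ} (ts : Fin (M + 1) → ℝ) :
    ∑ i : Fin M, (ts i.succ - ts i.castSucc) = ts (Fin.last M) - ts 0 := by
  have key : ∀ i : Fin (M + 1), psum (fun l => ts l.succ - ts l.castSucc) i = ts i - ts 0 := by
    intro i
    induction i using Fin.induction with
    | zero => rw [psum_zero]; ring
    | succ i ih => rw [psum_succ, ih]; ring
  rw [← psum_last, key]

lemma exists_grid {N : ℕ} (τ : Fin N → ℝ) (T : ℝ) (hτ0 : ∀ j, 0 ≤ τ j)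
    (hτT : ∀ j, τ j ≤ T) (hT : 0 ≤ T) :
    ∃ (M : ℕ) (ts : Fin (M + 1) → ℝ), Monotone ts ∧ ts 0 = 0 ∧ ts (Fin.last M) = T ∧
      ∀ j, ∃ i, ts i = τ j := by
  classical
  set F : Finset ℝ := insert 0 (insert T (Finset.image τ Finset.univ)) with hF
  have h0F : (0 : ℝ) ∈ F := Finset.mem_insert_self _ _
  have hTF : T ∈ F := Finset.mem_insert_of_mem (Finset.mem_insert_self _ _)
  have hbound : ∀ x ∈ F, 0 ≤ x ∧ x ≤ T := by
    intro x hx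
    simp only [hF, Finset.mem_insert, Finset.mem_image, Finset.mem_univ, true_and] at hx
    rcases hx with rfl | rfl | ⟨j, rfl⟩
    · exact ⟨le_rfl, hT⟩
    · exact ⟨hT, le_rfl⟩
    · exact ⟨hτ0 j, hτT j⟩
  obtain ⟨M, hM⟩ : ∃ M, F.card = M + 1 :=
    ⟨F.card - 1, (Nat.succ_pred_eq_of_pos (Finset.card_pos.mpr ⟨0, h0F⟩)).symm⟩
  set e := F.orderIsoOfFin hM with he
  have hmem : ∀ i, ((e i : ℝ)) ∈ F := fun i => (e i).2
  have hmono : Monotone fun i => (e i : ℝ) :=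
    fun a b hab => Subtype.coe_le_coe.mpr (e.monotone hab)
  refine ⟨M, fun i => (e i : ℝ), hmono, ?_, ?_, ?_⟩
  · obtain ⟨i0, hi0⟩ := e.surjective ⟨0, h0F⟩
    have h1 : (e 0 : ℝ) ≤ 0 := by
      rw [show (0:ℝ) = (e i0 : ℝ) by rw [hi0]]
      exact hmono (Fin.zero_le i0)
    exact le_antisymm h1 (hbound _ (hmem 0)).1
  · obtain ⟨iT, hiT⟩ := e.surjective ⟨T, hTF⟩
    have h1 : T ≤ (e (Fin.last M) : ℝ) := by
      rw [show T = (e iT : ℝ) by rw [hiT]]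
      exact hmono (Fin.le_last iT)
    exact le_antisymm (hbound _ (hmem _)).2 h1
  · intro j
    have : τ j ∈ F := Finset.mem_insert_of_mem (Finset.mem_insert_of_mem
      (Finset.mem_image.mpr ⟨j, Finset.mem_univ j, rfl⟩))
    obtain ⟨i, hi⟩ := e.surjective ⟨τ j, this⟩
    exact ⟨i, by rw [← Subtype.coe_mk (τ j) this, ← hi]⟩

variable [IsProbabilityMeasure P]

lemma measurableSet_psum_event {M N : ℕ} (idx : Fin N → Fin (M + 1)) (c : Fin N → ℝ) :
    MeasurableSet {v : Fin M → ℝ | ∀ j, psum v (idx j) ≤ c j} := by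
  have : {v : Fin M → ℝ | ∀ j, psum v (idx j) ≤ c j}
      = ⋂ j, {v | psum v (idx j) ≤ c j} := by ext v; simp [Set.mem_iInter]
  rw [this]
  exact MeasurableSet.iInter fun j => measurableSet_le (measurable_psum _) measurable_const

lemma IsBM.event_eq_preimage (hV : IsBM P V ν σ) {M N : ℕ} {ts : Fin (M + 1) → ℝ}
    (h0 : ts 0 = 0) {idx : Fin N → Fin (M + 1)} {τ c : Fin N → ℝ}
    (hidx : ∀ j, ts (idx j) = τ j) :
    {ω | ∀ j, V (τ j) ω ≤ c j}
      = (fun ω (i : Fin M) => V (ts i.succ) ω - V (ts i.castSucc) ω) ⁻¹'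
          {v | ∀ j, psum v (idx j) ≤ c j} := by
  have hrep : ∀ (ω : Ω) (j : Fin N),
      psum (fun l : Fin M => V (ts l.succ) ω - V (ts l.castSucc) ω) (idx j) = V (τ j) ω := by
    intro ω j
    rw [← hV.eq_psum h0 ω (idx j), hidx j]
  ext ω
  simp only [Set.mem_setOf_eq, Set.mem_preimage, hrep]

lemma IsBM.event_prob (hV : IsBM P V ν σ) {M N : ℕ} {ts : Fin (M + 1) → ℝ}
    (hmono : Monotone ts) (h0 : ts 0 = 0) {idx : Fin N → Fin (M + 1)} {τ c : Fin N → ℝ}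
    (hidx : ∀ j, ts (idx j) = τ j) :
    P {ω | ∀ j, V (τ j) ω ≤ c j}
      = Measure.pi (fun i => gaussianReal (ν * (ts i.succ - ts i.castSucc))
            ((σ ^ 2 * (ts i.succ - ts i.castSucc)).toNNReal))
          {v | ∀ j, psum v (idx j) ≤ c j} := by
  have hIncMeas : Measurable (fun ω (i : Fin M) => V (ts i.succ) ω - V (ts i.castSucc) ω) :=
    measurable_pi_lambda _ fun i => ((hV.measurable _).sub (hV.measurable _))
  rw [hV.event_eq_preimage h0 hidx,
    ← Measure.map_apply hIncMeas (measurableSet_psum_event idx c),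
    hV.map_increments hmono h0]

lemma IsBM.event_tilt (hV : IsBM P V ν σ) {M N : ℕ} {ts : Fin (M + 1) → ℝ}
    (hmono : Monotone ts) (h0 : ts 0 = 0) {T : ℝ} (hlast : ts (Fin.last M) = T)
    {idx : Fin N → Fin (M + 1)} {τ c : Fin N → ℝ}
    (hidx : ∀ j, ts (idx j) = τ j) :
    P.withDensity (fun ω => ENNReal.ofReal (rexp (-(V T ω))))
        {ω | ∀ j, V (τ j) ω ≤ c j}
      = ((Measure.pi (fun i => gaussianReal (ν * (ts i.succ - ts i.castSucc))
            ((σ ^ 2 * (ts i.succ - ts i.castSucc)).toNNReal))).withDensity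
          (fun v => ENNReal.ofReal (rexp (-∑ i, v i))))
          {v | ∀ j, psum v (idx j) ≤ c j} := by
  have hIncMeas : Measurable (fun ω (i : Fin M) => V (ts i.succ) ω - V (ts i.castSucc) ω) :=
    measurable_pi_lambda _ fun i => ((hV.measurable _).sub (hV.measurable _))
  have hS := measurableSet_psum_event (M := M) idx c
  have hE : MeasurableSet {ω | ∀ j, V (τ j) ω ≤ c j} := by
    rw [hV.event_eq_preimage h0 hidx]
    exact hIncMeas hS
  have hVT : ∀ ω, V T ω = ∑ i : Fin M, (V (ts i.succ) ω - V (ts i.castSucc) ω) := by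
    intro ω
    rw [← hlast, hV.eq_psum h0 ω (Fin.last M), psum_last]
  have hsum : Measurable fun v : Fin M → ℝ => ∑ i, v i :=
    Finset.measurable_sum _ fun i _ => measurable_pi_apply i
  have hgm : Measurable fun v : Fin M → ℝ => ENNReal.ofReal (rexp (-∑ i, v i)) :=
    Measurable.ennreal_ofReal (Measurable.exp hsum.neg)
  rw [withDensity_apply _ hE, withDensity_apply _ hS, hV.event_eq_preimage h0 hidx,
    ← hV.map_increments hmono h0, setLIntegral_map hS hgm hIncMeas]
  refine setLIntegral_congr_fun (hIncMeas hS) (fun ω _ => ?_)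
  rw [hVT ω]

lemma IsBM.prob_le_eq (hZ : IsBM P Z ν σ) (hZ' : IsBM P Z' ν σ) {N : ℕ}
    (τ c : Fin N → ℝ) (hτ0 : ∀ j, 0 ≤ τ j) :
    P {ω | ∀ j, Z (τ j) ω ≤ c j} = P {ω | ∀ j, Z' (τ j) ω ≤ c j} := by
  obtain ⟨T0, hT0⟩ : ∃ T0 : ℝ, (∀ j, τ j ≤ T0) ∧ 0 ≤ T0 :=
    ⟨∑ j, τ j, fun j => Finset.single_le_sum (fun i _ => hτ0 i) (Finset.mem_univ j),
      Finset.sum_nonneg fun i _ => hτ0 i⟩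
  obtain ⟨M, ts, hmono, h0, _, hsurj⟩ := exists_grid τ T0 hτ0 hT0.1 hT0.2
  choose idx hidx using hsurj
  rw [hZ.event_prob hmono h0 hidx, hZ'.event_prob hmono h0 hidx]

lemma IsBM.tilt_eq (hZ : IsBM P Z ν σ) (hZ' : IsBM P Z' (ν - σ ^ 2) σ) {N : ℕ}
    (τ c : Fin N → ℝ) {T : ℝ} (hT : 0 ≤ T) (hτ0 : ∀ j, 0 ≤ τ j) (hτT : ∀ j, τ j ≤ T) :
    P.withDensity (fun ω => ENNReal.ofReal (rexp (-(Z T ω)))) {ω | ∀ j, Z (τ j) ω ≤ c j}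
      = ENNReal.ofReal (rexp ((σ ^ 2 / 2 - ν) * T)) * P {ω | ∀ j, Z' (τ j) ω ≤ c j} := by
  obtain ⟨M, ts, hmono, h0, hlast, hsurj⟩ := exists_grid τ T hτ0 hτT hT
  choose idx hidx using hsurj
  have hΔ : ∀ i : Fin M, 0 ≤ ts i.succ - ts i.castSucc :=
    fun i => sub_nonneg.mpr (hmono (Fin.castSucc_lt_succ (i := i)).le)
  rw [hZ.event_tilt hmono h0 hlast hidx, pi_tilt, hZ'.event_prob hmono h0 hidx]
  have hparam : ∀ i : Fin M,
      gaussianReal (ν * (ts i.succ - ts i.castSucc)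
          - ((σ ^ 2 * (ts i.succ - ts i.castSucc)).toNNReal : ℝ≥0))
          ((σ ^ 2 * (ts i.succ - ts i.castSucc)).toNNReal)
        = gaussianReal ((ν - σ ^ 2) * (ts i.succ - ts i.castSucc))
          ((σ ^ 2 * (ts i.succ - ts i.castSucc)).toNNReal) := by
    intro i
    congr 1
    rw [Real.coe_toNNReal _ (mul_nonneg (sq_nonneg σ) (hΔ i))]
    ring
  have hpi : (Measure.pi fun i : Fin M =>
      gaussianReal (ν * (ts i.succ - ts i.castSucc)
          - ((σ ^ 2 * (ts i.succ - ts i.castSucc)).toNNReal : ℝ≥0))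
        ((σ ^ 2 * (ts i.succ - ts i.castSucc)).toNNReal))
      = Measure.pi fun i : Fin M =>
        gaussianReal ((ν - σ ^ 2) * (ts i.succ - ts i.castSucc))
          ((σ ^ 2 * (ts i.succ - ts i.castSucc)).toNNReal) := by
    congr 1
    funext i
    exact hparam i
  rw [Measure.smul_apply, smul_eq_mul, hpi]
  congr 1
  have hcoef : ∀ i : Fin M, (((σ ^ 2 * (ts i.succ - ts i.castSucc)).toNNReal : ℝ≥0) : ℝ) / 2
      - ν * (ts i.succ - ts i.castSucc)
      = (σ ^ 2 / 2 - ν) * (ts i.succ - ts i.castSucc) := by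
    intro i
    rw [Real.coe_toNNReal _ (mul_nonneg (sq_nonneg σ) (hΔ i))]
    ring
  rw [Finset.prod_congr rfl fun i (_ : i ∈ Finset.univ) => by rw [hcoef i],
    ennreal_ofReal_prod _ _ (fun i _ => (Real.exp_pos _).le), ← Real.exp_sum,
    ← Finset.mul_sum, ts_telescope, hlast, h0, sub_zero]

end Chunk4

section Chunk5

open Real Filter
open scoped NNReal ENNReal Topology

variable {Ω : Type*} [MeasurableSpace Ω] {P : Measure Ω} {Z Z' : ℝ → Ω → ℝ} {ν σ : ℝ}

lemma event_iInter_eq (V : ℝ → Ω → ℝ) {C : Set (ℝ × ℝ)} {e : ℕ → ℝ × ℝ}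
    (he : C = Set.range e) :
    {ω | ∀ p ∈ C, V p.1 ω ≤ p.2}
      = ⋂ N : ℕ, {ω | ∀ j : Fin (N + 1), V (e j).1 ω ≤ (e j).2} := by
  ext ω
  simp only [Set.mem_setOf_eq, Set.mem_iInter, he, Set.mem_range]
  constructor
  · rintro h N j
    exact h _ ⟨j, rfl⟩
  · rintro h p ⟨k, rfl⟩
    exact h k ⟨k, Nat.lt_succ_self k⟩

lemma event_antitone (V : ℝ → Ω → ℝ) (e : ℕ → ℝ × ℝ) :
    Antitone fun N : ℕ => {ω | ∀ j : Fin (N + 1), V (e j).1 ω ≤ (e j).2} := by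
  intro a b hab ω hω j
  exact hω (⟨j.val, by omega⟩ : Fin (b + 1))

lemma event_measurable (hV : IsBM P V ν σ) (e : ℕ → ℝ × ℝ) (N : ℕ) :
    MeasurableSet {ω | ∀ j : Fin (N + 1), V (e j).1 ω ≤ (e j).2} := by
  have : {ω | ∀ j : Fin (N + 1), V (e j).1 ω ≤ (e j).2}
      = ⋂ j : Fin (N + 1), {ω | V (e j).1 ω ≤ (e j).2} := by ext; simp [Set.mem_iInter]
  rw [this]
  exact MeasurableSet.iInter fun j => measurableSet_le (hV.measurable _) measurable_const

variable [IsProbabilityMeasure P]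

lemma IsBM.transfer_prob (hZ : IsBM P Z ν σ) (hZ' : IsBM P Z' ν σ)
    {C : Set (ℝ × ℝ)} (hC : C.Countable) (hne : C.Nonempty) (hC0 : ∀ p ∈ C, 0 ≤ p.1) :
    P {ω | ∀ p ∈ C, Z p.1 ω ≤ p.2} = P {ω | ∀ p ∈ C, Z' p.1 ω ≤ p.2} := by
  obtain ⟨e, he⟩ := hC.exists_eq_range hne
  have hfd : ∀ N : ℕ, P {ω | ∀ j : Fin (N + 1), Z (e j).1 ω ≤ (e j).2}
      = P {ω | ∀ j : Fin (N + 1), Z' (e j).1 ω ≤ (e j).2} := fun N =>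
    hZ.prob_le_eq hZ' (fun j : Fin (N + 1) => (e j).1) (fun j => (e j).2)
      (fun j => hC0 _ (he ▸ Set.mem_range_self _))
  rw [event_iInter_eq Z he, event_iInter_eq Z' he]
  have l1 := tendsto_measure_iInter_atTop (μ := P)
    (fun N => (event_measurable hZ e N).nullMeasurableSet) (event_antitone Z e)
    ⟨0, measure_ne_top P _⟩
  have l2 := tendsto_measure_iInter_atTop (μ := P)
    (fun N => (event_measurable hZ' e N).nullMeasurableSet) (event_antitone Z' e)
    ⟨0, measure_ne_top P _⟩
  have hfun : (P ∘ fun N : ℕ => {ω | ∀ j : Fin (N + 1), Z (e j).1 ω ≤ (e j).2})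
      = (P ∘ fun N : ℕ => {ω | ∀ j : Fin (N + 1), Z' (e j).1 ω ≤ (e j).2}) :=
    funext fun N => hfd N
  rw [hfun] at l1
  exact tendsto_nhds_unique l1 l2

lemma IsBM.transfer_tilt (hZ : IsBM P Z ν σ) (hZ' : IsBM P Z' (ν - σ ^ 2) σ)
    {T : ℝ} (hT : 0 ≤ T)
    {C : Set (ℝ × ℝ)} (hC : C.Countable) (hne : C.Nonempty) (hC0 : ∀ p ∈ C, 0 ≤ p.1)
    (hCT : ∀ p ∈ C, p.1 ≤ T) :
    P.withDensity (fun ω => ENNReal.ofReal (rexp (-(Z T ω))))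
        {ω | ∀ p ∈ C, Z p.1 ω ≤ p.2}
      = ENNReal.ofReal (rexp ((σ ^ 2 / 2 - ν) * T)) * P {ω | ∀ p ∈ C, Z' p.1 ω ≤ p.2} := by
  obtain ⟨e, he⟩ := hC.exists_eq_range hne
  set Q := P.withDensity (fun ω => ENNReal.ofReal (rexp (-(Z T ω)))) with hQ
  have hmem : ∀ k : ℕ, e k ∈ C := fun k => he ▸ Set.mem_range_self _
  have hfd : ∀ N : ℕ, Q {ω | ∀ j : Fin (N + 1), Z (e j).1 ω ≤ (e j).2}
      = ENNReal.ofReal (rexp ((σ ^ 2 / 2 - ν) * T)) *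
          P {ω | ∀ j : Fin (N + 1), Z' (e j).1 ω ≤ (e j).2} := fun N =>
    hZ.tilt_eq hZ' (fun j : Fin (N + 1) => (e j).1) (fun j => (e j).2) hT
      (fun j => hC0 _ (hmem j)) (fun j => hCT _ (hmem j))
  have hQuniv : Q Set.univ = ENNReal.ofReal (rexp ((σ ^ 2 / 2 - ν) * T)) := by
    have h0 := hZ.tilt_eq hZ' (N := 0) (fun j => j.elim0) (fun j => j.elim0) hT
      (fun j => j.elim0) (fun j => j.elim0)
    have huniv : {ω : Ω | ∀ j : Fin 0, Z (Fin.elim0 j) ω ≤ Fin.elim0 j} = Set.univ := by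
      ext ω; simp
    have huniv' : {ω : Ω | ∀ j : Fin 0, Z' (Fin.elim0 j) ω ≤ Fin.elim0 j} = Set.univ := by
      ext ω; simp
    rw [huniv, huniv'] at h0
    rw [hQ, h0, measure_univ, mul_one]
  haveI : IsFiniteMeasure Q :=
    ⟨by rw [hQuniv]; exact ENNReal.ofReal_lt_top⟩
  rw [event_iInter_eq Z he, event_iInter_eq Z' he]
  have l1 := tendsto_measure_iInter_atTop (μ := Q)
    (fun N => (event_measurable hZ e N).nullMeasurableSet) (event_antitone Z e)
    ⟨0, measure_ne_top Q _⟩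
  have l2 := tendsto_measure_iInter_atTop (μ := P)
    (fun N => (event_measurable hZ' e N).nullMeasurableSet) (event_antitone Z' e)
    ⟨0, measure_ne_top P _⟩
  have l2' := ENNReal.Tendsto.const_mul (a := ENNReal.ofReal (rexp ((σ ^ 2 / 2 - ν) * T))) l2
    (Or.inr ENNReal.ofReal_ne_top)
  have hfun : (Q ∘ fun N : ℕ => {ω | ∀ j : Fin (N + 1), Z (e j).1 ω ≤ (e j).2})
      = fun N : ℕ => ENNReal.ofReal (rexp ((σ ^ 2 / 2 - ν) * T)) *
          (P ∘ fun N : ℕ => {ω | ∀ j : Fin (N + 1), Z' (e j).1 ω ≤ (e j).2}) N :=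
    funext fun N => hfd N
  rw [hfun] at l1
  exact tendsto_nhds_unique l1 l2'

end Chunk5

section Chunk6

open Real

/-- countable dense subset of `[a, b]` containing the endpoints -/
def Dset (a b : ℝ) : Set ℝ := {a, b} ∪ (Set.Ioo a b ∩ Set.range ((↑) : ℚ → ℝ))

lemma Dset_countable (a b : ℝ) : (Dset a b).Countable :=
  (((Set.countable_singleton b).insert a)).union
    ((Set.countable_range _).mono Set.inter_subset_right)

lemma Dset_subset {a b : ℝ} (hab : a ≤ b) : Dset a b ⊆ Set.Icc a b := by
  rintro x (hx | hx)
  · rcases hx with rfl | hx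
    · exact Set.left_mem_Icc.mpr hab
    · rw [Set.mem_singleton_iff] at hx; subst hx; exact Set.right_mem_Icc.mpr hab
  · exact Set.Ioo_subset_Icc_self hx.1

lemma sSup_image_le_iff {f : ℝ → ℝ} (hf : Continuous f) {a b : ℝ} (hab : a ≤ b) (cb : ℝ) :
    sSup (f '' Set.Icc a b) ≤ cb ↔ ∀ τ ∈ Dset a b, f τ ≤ cb := by
  constructor
  · intro h τ hτ
    exact le_trans (le_csSup (isCompact_Icc.image hf).bddAbove
      (Set.mem_image_of_mem f (Dset_subset hab hτ))) h
  · intro h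
    refine csSup_le (Set.Nonempty.image f ⟨a, Set.left_mem_Icc.mpr hab⟩) ?_
    rintro y ⟨τ, hτ, rfl⟩
    have hsub : Dset a b ⊆ {x | f x ≤ cb} := fun x hx => h x hx
    have hcl : IsClosed {x | f x ≤ cb} := isClosed_le hf continuous_const
    have hτcl : τ ∈ closure (Dset a b) := by
      rcases eq_or_lt_of_le hτ.1 with h1 | h1
      · exact subset_closure (Or.inl (by simp [← h1]))
      rcases eq_or_lt_of_le hτ.2 with h2 | h2
      · exact subset_closure (Or.inl (by simp [h2]))
      · have hd := Dense.open_subset_closure_inter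
          (Rat.denseRange_cast (𝕜 := ℝ)) (isOpen_Ioo (a := a) (b := b))
        exact closure_mono Set.subset_union_right (hd ⟨h1, h2⟩)
    exact hcl.closure_subset_iff.mpr hsub hτcl

lemma runMax_le_iff {Ω : Type*} {V : ℝ → Ω → ℝ} {ω : Ω}
    (hV : Continuous fun τ => V τ ω) {a b : ℝ} (hab : a ≤ b) (cb : ℝ) :
    runMax V a b ω ≤ cb ↔ ∀ τ ∈ Dset a b, V τ ω ≤ cb :=
  sSup_image_le_iff hV hab cb

lemma runMin_eq_neg_runMax {Ω : Type*} (X : ℝ → Ω → ℝ) (a b : ℝ) (ω : Ω) :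
    runMin X a b ω = -runMax (fun τ ω' => -X τ ω') a b ω := by
  unfold runMin runMax
  rw [Real.sInf_def]
  congr 1
  congr 1
  ext y
  simp only [Set.mem_neg, Set.mem_image]
  constructor
  · rintro ⟨τ, hτ, hy⟩
    exact ⟨τ, hτ, by rw [hy]; ring⟩
  · rintro ⟨τ, hτ, hy⟩
    exact ⟨τ, hτ, by rw [← hy]; ring⟩

lemma le_runMin_iff {Ω : Type*} {X : ℝ → Ω → ℝ} {ω : Ω}
    (hX : Continuous fun τ => X τ ω) {a b : ℝ} (hab : a ≤ b) (cb : ℝ) :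
    cb ≤ runMin X a b ω ↔ runMax (fun τ ω' => -X τ ω') a b ω ≤ -cb := by
  rw [runMin_eq_neg_runMax, le_neg]

end Chunk6

section Chunk7

open Real

variable {Ω : Type*}

/-- countable constraint set encoding the icicled barrier event -/
def CsetD (t : ℕ → ℝ) (n : ℕ) (I : Finset ℕ) (x' m : ℕ → ℝ) : Set (ℝ × ℝ) :=
  ((fun i => (t i, x' i)) '' ↑(Finset.Icc 1 n)) ∪
    ⋃ i ∈ (↑I : Set ℕ), (fun τ => (τ, -m i)) '' Dset (t (i - 1)) (t i)

lemma CsetD_countable (t : ℕ → ℝ) (n : ℕ) (I : Finset ℕ) (x' m : ℕ → ℝ) :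
    (CsetD t n I x' m).Countable :=
  (((Finset.Icc 1 n).countable_toSet.image _)).union
    (Set.Countable.biUnion I.countable_toSet fun i _ => (Dset_countable _ _).image _)

lemma CsetD_nonempty (t : ℕ → ℝ) {n : ℕ} (hn : 0 < n) (I : Finset ℕ) (x' m : ℕ → ℝ) :
    (CsetD t n I x' m).Nonempty :=
  ⟨(t n, x' n), Or.inl ⟨n, Finset.mem_coe.mpr (Finset.mem_Icc.mpr ⟨hn, le_rfl⟩), rfl⟩⟩

lemma CsetD_mem_event (t : ℕ → ℝ) (n : ℕ) (I : Finset ℕ) (hI : I ⊆ Finset.Icc 1 n)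
    (x' m : ℕ → ℝ) (hablt : ∀ i ∈ I, t (i - 1) < t i)
    (V : ℝ → Ω → ℝ) (hVc : ∀ ω, Continuous fun τ => V τ ω) :
    {ω | ∀ p ∈ CsetD t n I x' m, V p.1 ω ≤ p.2}
      = {ω | (∀ i ∈ Finset.Icc 1 n, V (t i) ω ≤ x' i) ∧
          ∀ i ∈ I, runMax V (t (i - 1)) (t i) ω ≤ -m i} := by
  ext ω
  simp only [Set.mem_setOf_eq]
  constructor
  · intro h
    refine ⟨fun i hi => h (t i, x' i) (Or.inl ⟨i, Finset.mem_coe.mpr hi, rfl⟩), fun i hiI => ?_⟩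
    rw [runMax_le_iff (hVc ω) (hablt i hiI).le]
    intro τ hτ
    refine h (τ, -m i) (Or.inr ?_)
    simp only [Set.mem_iUnion, Set.mem_image, exists_prop]
    exact ⟨i, Finset.mem_coe.mpr hiI, τ, hτ, rfl⟩
  · rintro ⟨h1, h2⟩ p hp
    rcases hp with ⟨i, hi, rfl⟩ | hp
    · exact h1 i (Finset.mem_coe.mp hi)
    · simp only [Set.mem_iUnion, Set.mem_image, exists_prop] at hp
      obtain ⟨i, hiI, τ, hτ, rfl⟩ := hp
      exact (runMax_le_iff (hVc ω) (hablt i (Finset.mem_coe.mp hiI)).le (-m i)).mp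
        (h2 i (Finset.mem_coe.mp hiI)) τ hτ

lemma CsetD_bounds {t : ℕ → ℝ} {n : ℕ} {I : Finset ℕ} (hI : I ⊆ Finset.Icc 1 n)
    (x' m : ℕ → ℝ)
    (hchain : ∀ j, j ≤ n → ∀ i, i ≤ j → t i ≤ t j) (ht0 : t 0 = 0) :
    ∀ p ∈ CsetD t n I x' m, 0 ≤ p.1 ∧ p.1 ≤ t n := by
  have ht0' : ∀ i, i ≤ n → 0 ≤ t i := fun i hi => ht0 ▸ hchain i hi 0 (Nat.zero_le i)
  rintro p (⟨i, hi, rfl⟩ | hp)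
  · have hi' := Finset.mem_Icc.mp (Finset.mem_coe.mp hi)
    exact ⟨ht0' i hi'.2, hchain n le_rfl i hi'.2⟩
  · simp only [Set.mem_iUnion, Set.mem_image, exists_prop] at hp
    obtain ⟨i, hiI, τ, hτ, rfl⟩ := hp
    have hi' := Finset.mem_Icc.mp (hI (Finset.mem_coe.mp hiI))
    have hab : t (i - 1) ≤ t i := hchain i hi'.2 (i - 1) (by omega)
    have hτ' := Dset_subset hab hτ
    constructor
    · exact le_trans (ht0' (i - 1) (by omega)) hτ'.1
    · exact le_trans hτ'.2 (hchain n le_rfl i hi'.2)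

end Chunk7


/-- **Down-and-out icicled multi-step barrier call price.** In the Black–Scholes model
`S(t) = S(0) e^{X(t)}` with risk-neutral drift `r - σ²/2`,
`e^{-rT} E[(S(T) - K)⁺ I(A_d)]
  = S(0) PA_u(-r - σ²/2; -x₁,…,-x_{n-1}, (-xₙ) ∧ (-k); -m)
  - K e^{-rT} PA_u(-r + σ²/2; -x₁,…,-x_{n-1}, (-xₙ) ∧ (-k); -m)`. -/
theorem down_and_out_call_price
    {Ω : Type*} [MeasurableSpace Ω] (P : Measure Ω) [IsProbabilityMeasure P]
    (r σ : ℝ) (hσ : 0 < σ)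
    (X Y₁ Y₂ : ℝ → Ω → ℝ)
    (hX : IsBM P X (r - σ ^ 2 / 2) σ)
    (hY₁ : IsBM P Y₁ (-r - σ ^ 2 / 2) σ) (hY₂ : IsBM P Y₂ (-r + σ ^ 2 / 2) σ)
    (n : ℕ) (hn : 0 < n) (T : ℝ) (t : ℕ → ℝ) (ht0 : t 0 = 0) (htn : t n = T)
    (htmono : ∀ i < n, t i < t (i + 1))
    (I : Finset ℕ) (hI : I ⊆ Finset.Icc 1 n) (hIne : I.Nonempty)
    (S0 K : ℝ) (hS0 : 0 < S0) (hK : 0 < K)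
    (L B : ℕ → ℝ) (hL : ∀ i ∈ Finset.Icc 1 n, 0 < L i) (hB : ∀ i ∈ I, 0 < B i)
    (x m : ℕ → ℝ) (k : ℝ)
    (hx : ∀ i, x i = Real.log (L i / S0)) (hm : ∀ i, m i = Real.log (B i / S0))
    (hk : k = Real.log (K / S0))
    (hmmin : m (I.min' hIne) ≤ 0)
    (hxm : ∀ i ∈ I, m i ≤ x (i - 1) ∧ m i ≤ x i) :
    ∫ ω, Real.exp (-r * T) * max (S0 * Real.exp (X (t n) ω) - K) 0 *
        Set.indicator {ω' | (∀ i ∈ Finset.Icc 1 n, x i ≤ X (t i) ω') ∧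
          ∀ i ∈ I, m i ≤ runMin X (t (i - 1)) (t i) ω'} (fun _ => (1 : ℝ)) ω ∂P =
      S0 * PAu P Y₁ t n I
          (Function.update (fun i => -x i) n (min (-x n) (-k))) (fun i => -m i) -
        K * Real.exp (-r * T) * PAu P Y₂ t n I
          (Function.update (fun i => -x i) n (min (-x n) (-k))) (fun i => -m i) := by
  subst htn
  set ν : ℝ := -(r - σ ^ 2 / 2) with hν
  have hY₂' : IsBM P Y₂ ν σ := by
    rw [hν, show -(r - σ ^ 2 / 2) = -r + σ ^ 2 / 2 by ring]; exact hY₂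
  have hY₁' : IsBM P Y₁ (ν - σ ^ 2) σ := by
    rw [hν, show -(r - σ ^ 2 / 2) - σ ^ 2 = -r - σ ^ 2 / 2 by ring]; exact hY₁
  have hZ : IsBM P (fun τ ω => -X τ ω) ν σ := by rw [hν]; exact hX.neg
  -- time grid facts
  have hchain : ∀ j, j ≤ n → ∀ i, i ≤ j → t i ≤ t j := by
    intro j
    induction j with
    | zero => intro _ i hi; rw [Nat.le_zero.mp hi]
    | succ j ih =>
      intro hj i hi
      rcases eq_or_lt_of_le hi with rfl | hlt
      · exact le_rfl
      · exact le_trans (ih (by omega) i (by omega)) (le_of_lt (htmono j (by omega)))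
  have hablt : ∀ i ∈ I, t (i - 1) < t i := by
    intro i hi
    obtain ⟨h1, h2⟩ := Finset.mem_Icc.mp (hI hi)
    have := htmono (i - 1) (by omega)
    rwa [show i - 1 + 1 = i by omega] at this
  have hTnn : 0 ≤ t n := ht0 ▸ hchain n le_rfl 0 (Nat.zero_le n)
  set x' := Function.update (fun i => -x i) n (min (-x n) (-k)) with hx'
  have hCb := CsetD_bounds hI x' m hchain ht0
  have hCcount := CsetD_countable t n I x' m
  have hCne := CsetD_nonempty t hn I x' m
  have hC0 : ∀ p ∈ CsetD t n I x' m, 0 ≤ p.1 := fun p hp => (hCb p hp).1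
  have hCT : ∀ p ∈ CsetD t n I x' m, p.1 ≤ t n := fun p hp => (hCb p hp).2
  set E2 : Set Ω := {ω | ∀ p ∈ CsetD t n I x' m, -X p.1 ω ≤ p.2} with hE2def
  have hnIcc : n ∈ Finset.Icc 1 n := Finset.mem_Icc.mpr ⟨hn, le_rfl⟩
  -- characterization of E2
  have hiff : ∀ ω : Ω, ω ∈ E2 ↔
      (((∀ i ∈ Finset.Icc 1 n, x i ≤ X (t i) ω) ∧
        ∀ i ∈ I, m i ≤ runMin X (t (i - 1)) (t i) ω) ∧ k ≤ X (t n) ω) := by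
    intro ω
    have hev := CsetD_mem_event t n I hI x' m hablt (fun τ ω' => -X τ ω')
      (fun ω' => (hZ.continuous ω'))
    have hmem := Set.ext_iff.mp hev ω
    rw [hE2def]
    rw [Set.mem_setOf_eq] at hmem ⊢
    rw [hmem]
    constructor
    · rintro ⟨hA, hB⟩
      have hn1 := hA n hnIcc
      rw [hx', Function.update_self] at hn1
      obtain ⟨hn2, hn3⟩ := le_min_iff.mp hn1
      refine ⟨⟨fun i hi => ?_, fun i hiI => ?_⟩, neg_le_neg_iff.mp hn3⟩
      · by_cases hin : i = n
        · rw [hin]; exact neg_le_neg_iff.mp hn2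
        · have := hA i hi
          rw [hx', Function.update_of_ne hin] at this
          exact neg_le_neg_iff.mp this
      · rw [le_runMin_iff (hX.continuous ω) (hablt i hiI).le]
        exact hB i hiI
    · rintro ⟨⟨h1, h2⟩, hk'⟩
      constructor
      · intro i hi
        by_cases hin : i = n
        · rw [hin, hx', Function.update_self]
          exact le_min (neg_le_neg_iff.mpr (h1 n hnIcc)) (neg_le_neg_iff.mpr hk')
        · rw [hx', Function.update_of_ne hin]
          exact neg_le_neg_iff.mpr (h1 i hi)
      · intro i hiI
        rw [← le_runMin_iff (hX.continuous ω) (hablt i hiI).le]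
        exact h2 i hiI
  have hE2meas : MeasurableSet E2 := by
    have : E2 = ⋂ p ∈ CsetD t n I x' m, {ω | -X p.1 ω ≤ p.2} := by
      rw [hE2def]; ext ω; simp [Set.mem_iInter]
    rw [this]
    exact MeasurableSet.biInter hCcount fun p _ =>
      measurableSet_le (hX.measurable p.1).neg measurable_const
  -- the two PAu identities
  have hPAu1 : PAu P Y₁ t n I x' (fun i => -m i)
      = (P {ω | ∀ p ∈ CsetD t n I x' m, Y₁ p.1 ω ≤ p.2}).toReal := by
    unfold PAu
    rw [CsetD_mem_event t n I hI x' m hablt Y₁ (fun ω' => hY₁'.continuous ω')]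
  have hPAu2 : PAu P Y₂ t n I x' (fun i => -m i)
      = (P {ω | ∀ p ∈ CsetD t n I x' m, Y₂ p.1 ω ≤ p.2}).toReal := by
    unfold PAu
    rw [CsetD_mem_event t n I hI x' m hablt Y₂ (fun ω' => hY₂'.continuous ω')]
  -- transfer results
  have htrans2 := hZ.transfer_prob hY₂' hCcount hCne hC0
  have htrans1 := hZ.transfer_tilt hY₁' hTnn hCcount hCne hC0 hCT
  rw [show (σ ^ 2 / 2 - ν) = r by rw [hν]; ring] at htrans1
  -- payoff decomposition
  have hkK : Real.exp k = K / S0 := by rw [hk]; exact Real.exp_log (by positivity)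
  set Aset : Set Ω := {ω' | (∀ i ∈ Finset.Icc 1 n, x i ≤ X (t i) ω') ∧
      ∀ i ∈ I, m i ≤ runMin X (t (i - 1)) (t i) ω'} with hAdef
  have hpt : ∀ ω : Ω, Real.exp (-r * t n) * max (S0 * Real.exp (X (t n) ω) - K) 0 *
        Set.indicator Aset (fun _ => (1 : ℝ)) ω
      = S0 * Real.exp (-r * t n) *
          (Real.exp (X (t n) ω) * Set.indicator E2 (fun _ => (1 : ℝ)) ω)
        - K * Real.exp (-r * t n) * Set.indicator E2 (fun _ => (1 : ℝ)) ω := by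
    intro ω
    by_cases hA : ω ∈ Aset
    · by_cases hkX : k ≤ X (t n) ω
      · have hmemE2 : ω ∈ E2 := (hiff ω).mpr ⟨hA, hkX⟩
        rw [Set.indicator_of_mem hA, Set.indicator_of_mem hmemE2]
        have h1 : K / S0 ≤ Real.exp (X (t n) ω) := by
          rw [← hkK]; exact Real.exp_le_exp.mpr hkX
        have hKle : K ≤ S0 * Real.exp (X (t n) ω) := by
          rw [show K = S0 * (K / S0) by field_simp]
          exact mul_le_mul_of_nonneg_left h1 hS0.le
        rw [max_eq_left (sub_nonneg.mpr hKle)]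
        ring
      · have hnot : ω ∉ E2 := fun hmem => hkX ((hiff ω).mp hmem).2
        rw [Set.indicator_of_mem hA, Set.indicator_of_notMem hnot]
        have h1 : Real.exp (X (t n) ω) < K / S0 := by
          rw [← hkK]; exact Real.exp_lt_exp.mpr (lt_of_not_ge hkX)
        have hlt : S0 * Real.exp (X (t n) ω) < K := by
          rw [show K = S0 * (K / S0) by field_simp]
          exact mul_lt_mul_of_pos_left h1 hS0
        rw [max_eq_right (by linarith)]
        ring
    · have hnot : ω ∉ E2 := fun hmem => hA ((hiff ω).mp hmem).1
      rw [Set.indicator_of_notMem hA, Set.indicator_of_notMem hnot]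
      ring
  -- the weighted integral
  set g : Ω → ℝ := fun ω => Real.exp (X (t n) ω) * Set.indicator E2 (fun _ => (1 : ℝ)) ω
    with hgdef
  have hgmeas : Measurable g := by
    rw [hgdef]
    exact ((hX.measurable (t n)).exp).mul (Measurable.indicator measurable_const hE2meas)
  have hgnn : ∀ ω, 0 ≤ g ω := fun ω =>
    mul_nonneg (Real.exp_pos _).le (Set.indicator_nonneg (fun _ _ => zero_le_one) ω)
  have hlih : ∀ ω : Ω, ENNReal.ofReal (g ω)
      = Set.indicator E2 (fun ω' => ENNReal.ofReal (Real.exp (-(-X (t n) ω')))) ω := by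
    intro ω
    simp only [hgdef]
    by_cases hω : ω ∈ E2
    · rw [Set.indicator_of_mem hω, Set.indicator_of_mem hω, neg_neg, mul_one]
    · rw [Set.indicator_of_notMem hω, Set.indicator_of_notMem hω, mul_zero,
        ENNReal.ofReal_zero]
  have hlint : ∫⁻ ω, ENNReal.ofReal (g ω) ∂P
      = ENNReal.ofReal (Real.exp (r * t n)) *
          P {ω | ∀ p ∈ CsetD t n I x' m, Y₁ p.1 ω ≤ p.2} := by
    rw [lintegral_congr hlih, lintegral_indicator hE2meas, ← withDensity_apply _ hE2meas]
    exact htrans1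
  have hIntg : MeasureTheory.Integrable g P := by
    refine ⟨hgmeas.aestronglyMeasurable, ?_⟩
    rw [MeasureTheory.hasFiniteIntegral_iff_ofReal (Filter.Eventually.of_forall hgnn), hlint]
    exact ENNReal.mul_lt_top ENNReal.ofReal_lt_top (measure_lt_top P _)
  have hIntind : MeasureTheory.Integrable (fun ω => Set.indicator E2 (fun _ => (1:ℝ)) ω) P := by
    exact (MeasureTheory.integrable_const (1:ℝ)).indicator hE2meas
  have hg_int : ∫ ω, g ω ∂P = Real.exp (r * t n) *
      PAu P Y₁ t n I x' (fun i => -m i) := by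
    rw [MeasureTheory.integral_eq_lintegral_of_nonneg_ae
      (Filter.Eventually.of_forall hgnn) hgmeas.aestronglyMeasurable, hlint,
      ENNReal.toReal_mul, ENNReal.toReal_ofReal (Real.exp_pos _).le, hPAu1]
  have hind_int : ∫ ω, Set.indicator E2 (fun _ => (1:ℝ)) ω ∂P
      = PAu P Y₂ t n I x' (fun i => -m i) := by
    rw [MeasureTheory.integral_indicator_const (1:ℝ) hE2meas, smul_eq_mul, mul_one, measureReal_def,
      hPAu2, ← htrans2]
  -- assemble
  rw [show (fun ω => Real.exp (-r * t n) * max (S0 * Real.exp (X (t n) ω) - K) 0 *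
        Set.indicator Aset (fun _ => (1 : ℝ)) ω)
      = fun ω => (S0 * Real.exp (-r * t n)) * g ω
        - (K * Real.exp (-r * t n)) * Set.indicator E2 (fun _ => (1:ℝ)) ω from
    funext fun ω => by simp only [hgdef]; rw [hpt ω]]
  rw [MeasureTheory.integral_sub (hIntg.const_mul _) (hIntind.const_mul _),
    MeasureTheory.integral_const_mul, MeasureTheory.integral_const_mul, hg_int, hind_int]
  have hcancel : Real.exp (-r * t n) * Real.exp (r * t n) = 1 := by
    rw [← Real.exp_add, show -r * t n + r * t n = 0 by ring, Real.exp_zero]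
  linear_combination (S0 * PAu P Y₁ t n I x' (fun i => -m i)) * hcancel
end
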